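/- Let N be an odd positive integer and τ ∈ ℍ. Then the function θ₀^{(N)}(·,τ) is periodic with respect to the lattice ℤ + ℤτ: for every z ∈ ℂ such that θ₀(Nz,Nτ) ≠ 0, θ₀(N(z+1),Nτ) ≠ 0 and θ₀(N(z+τ),Nτ) ≠ 0, one has θ₀^{(N)}(z+1,τ) = θ₀^{(N)}(z,τ) and θ₀^{(N)}(z+τ,τ) = θ₀^{(N)}(z,τ). -/

import Mathlib

noncomputable section

open Complex

/-- `e2 w = e^{2πi w}`. -/
def e2 (w : ℂ) : ℂ := Complex.exp (2 * (Real.pi : ℂ) * Complex.I * w)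

/-- The theta function `θ₀(z,τ) = ∏_{n ≥ 0} (1 − e^{2πi(nτ+z)})(1 − e^{2πi((n+1)τ−z)})`. -/
def theta0 (z τ : ℂ) : ℂ :=
  ∏' n : ℕ, (1 - e2 ((n : ℂ) * τ + z)) * (1 - e2 (((n : ℂ) + 1) * τ - z))

/-- The smoothed theta function `θ₀^{(N)}(z,τ) = θ₀(z,τ)^N / θ₀(Nz,Nτ)`. -/
def theta0N (N : ℕ) (z τ : ℂ) : ℂ :=
  theta0 z τ ^ N / theta0 ((N : ℂ) * z) ((N : ℂ) * τ)

lemma e2_add (a b : ℂ) : e2 (a + b) = e2 a * e2 b := by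
  rw [e2, e2, e2, ← Complex.exp_add]; ring_nf

lemma e2_ne_zero (w : ℂ) : e2 w ≠ 0 := Complex.exp_ne_zero _

lemma e2_nat_mul (n : ℕ) (w : ℂ) : e2 ((n : ℂ) * w) = e2 w ^ n := by
  rw [e2, e2, ← Complex.exp_nat_mul]; ring_nf

lemma e2_one : e2 1 = 1 := by
  rw [e2, mul_one, Complex.exp_two_pi_mul_I]

lemma e2_add_nat (w : ℂ) (n : ℕ) : e2 (w + n) = e2 w := by
  rw [e2_add, show ((n : ℂ)) = (n : ℂ) * 1 by ring, e2_nat_mul, e2_one, one_pow, mul_one]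

lemma e2_sub_nat (w : ℂ) (n : ℕ) : e2 (w - n) = e2 w := by
  conv_rhs => rw [show w = (w - n) + n by ring, e2_add_nat]

lemma e2_neg (w : ℂ) : e2 (-w) = (e2 w)⁻¹ := by
  rw [e2, e2, ← Complex.exp_neg]; ring_nf

lemma e2_norm (w : ℂ) : ‖e2 w‖ = Real.exp (-(2 * Real.pi * w.im)) := by
  rw [e2, Complex.norm_exp]
  congr 1
  simp [Complex.mul_re, Complex.mul_im]

lemma e2_norm_lt_one {w : ℂ} (hw : 0 < w.im) : ‖e2 w‖ < 1 := by
  rw [e2_norm, Real.exp_lt_one_iff]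
  have : 0 < 2 * Real.pi * w.im := by positivity
  linarith

set_option maxHeartbeats 1000000 in
lemma multipliable_one_sub_geom {q : ℂ} (hq : ‖q‖ < 1) (c : ℂ) :
    Multipliable (fun n : ℕ => 1 - q ^ n * c) := by
  obtain ⟨k, hk⟩ : ∃ k : ℕ, ∀ n ≥ k, ‖q ^ n * c‖ ≤ 1 / 2 := by
    have h := ((summable_geometric_of_norm_lt_one hq).mul_right c).tendsto_atTop_zero
    obtain ⟨k, hk⟩ := Metric.tendsto_atTop.mp h (1 / 2) (by norm_num)
    exact ⟨k, fun n hn => by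
      have := hk n hn; rw [dist_zero_right] at this; exact this.le⟩
  have hne : ∀ n : ℕ, (1 : ℂ) - q ^ (n + k) * c ≠ 0 := by
    intro n h
    have h1 : q ^ (n + k) * c = 1 := by linear_combination -h
    have h2 := hk (n + k) le_add_self
    rw [h1, norm_one] at h2
    norm_num at h2
  have hsum : Summable (fun n : ℕ => Complex.log (1 - q ^ (n + k) * c)) := by
    apply Summable.of_norm_bounded (g := fun n => 3 / 2 * (‖c‖ * ‖q‖ ^ k) * ‖q‖ ^ n)
      ((summable_geometric_of_lt_one (norm_nonneg q) hq).mul_left _)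
    intro n
    have hb : ‖-(q ^ (n + k) * c)‖ ≤ 1 / 2 := by
      rw [norm_neg]; exact hk _ le_add_self
    calc ‖Complex.log (1 - q ^ (n + k) * c)‖
        = ‖Complex.log (1 + -(q ^ (n + k) * c))‖ := by ring_nf
      _ ≤ 3 / 2 * ‖-(q ^ (n + k) * c)‖ := Complex.norm_log_one_add_half_le_self hb
      _ = 3 / 2 * (‖q‖ ^ (n + k) * ‖c‖) := by rw [norm_neg, norm_mul, norm_pow]
      _ = 3 / 2 * (‖c‖ * ‖q‖ ^ k) * ‖q‖ ^ n := by ring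
  have htail : Multipliable (fun n : ℕ => 1 - q ^ (n + k) * c) :=
    Complex.multipliable_of_summable_log hsum
  exact (htail.hasProd.prod_range_mul).multipliable

lemma theta0_eq (z τ : ℂ) (hτ : 0 < τ.im) :
    theta0 z τ = (∏' n : ℕ, (1 - (e2 τ) ^ n * e2 z)) *
      ∏' n : ℕ, (1 - (e2 τ) ^ n * (e2 τ * (e2 z)⁻¹)) := by
  have hq : ‖e2 τ‖ < 1 := e2_norm_lt_one hτ
  rw [theta0, ← Multipliable.tprod_mul (multipliable_one_sub_geom hq _) (multipliable_one_sub_geom hq _)]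
  apply tprod_congr
  intro n
  congr 2
  · rw [e2_add, e2_nat_mul]
  · rw [show ((n : ℂ) + 1) * τ - z = (n : ℂ) * τ + (τ + -z) by ring, e2_add, e2_nat_mul,
      e2_add, e2_neg]

lemma theta0_add_nat (z τ : ℂ) (N : ℕ) : theta0 (z + N) τ = theta0 z τ := by
  unfold theta0
  apply tprod_congr
  intro n
  have h1 : e2 ((n : ℂ) * τ + (z + N)) = e2 ((n : ℂ) * τ + z) := by
    rw [show (n : ℂ) * τ + (z + N) = ((n : ℂ) * τ + z) + (N : ℂ) by ring, e2_add_nat]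
  have h2 : e2 (((n : ℂ) + 1) * τ - (z + N)) = e2 (((n : ℂ) + 1) * τ - z) := by
    rw [show ((n : ℂ) + 1) * τ - (z + N) = (((n : ℂ) + 1) * τ - z) - (N : ℂ) by ring,
      e2_sub_nat]
  rw [h1, h2]

lemma theta0_add_one (z τ : ℂ) : theta0 (z + 1) τ = theta0 z τ := by
  have := theta0_add_nat z τ 1
  rwa [Nat.cast_one] at this

lemma theta0_add_tau (z τ : ℂ) (hτ : 0 < τ.im) :
    theta0 (z + τ) τ = -(e2 z)⁻¹ * theta0 z τ := by
  have hq : ‖e2 τ‖ < 1 := e2_norm_lt_one hτ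
  set q := e2 τ with hqdef
  set x := e2 z with hxdef
  have hx : x ≠ 0 := e2_ne_zero z
  have hq0 : q ≠ 0 := e2_ne_zero τ
  have e1 : e2 (z + τ) = q * x := by rw [e2_add]; ring
  have hA : Multipliable (fun n : ℕ => 1 - q ^ n * x) := multipliable_one_sub_geom hq x
  have hB : Multipliable (fun n : ℕ => 1 - q ^ n * x⁻¹) := multipliable_one_sub_geom hq _
  have hAshift : (∏' n : ℕ, (1 - q ^ n * x)) =
      (1 - q ^ 0 * x) * ∏' n : ℕ, (1 - q ^ (n + 1) * x) :=
    tprod_eq_zero_mul' (f := fun n : ℕ => 1 - q ^ n * x)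
      ((multipliable_one_sub_geom hq (q * x)).congr
        (fun n => show (1 : ℂ) - q ^ n * (q * x) = 1 - q ^ (n + 1) * x by ring))
  have hBshift : (∏' n : ℕ, (1 - q ^ n * x⁻¹)) =
      (1 - q ^ 0 * x⁻¹) * ∏' n : ℕ, (1 - q ^ (n + 1) * x⁻¹) :=
    tprod_eq_zero_mul' (f := fun n : ℕ => 1 - q ^ n * x⁻¹)
      ((multipliable_one_sub_geom hq (q * x⁻¹)).congr
        (fun n => show (1 : ℂ) - q ^ n * (q * x⁻¹) = 1 - q ^ (n + 1) * x⁻¹ by ring))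
  rw [theta0_eq (z + τ) τ hτ, theta0_eq z τ hτ, e1, ← hxdef, ← hqdef]
  have e3 : (∏' n : ℕ, ((1 : ℂ) - q ^ n * (q * x))) = ∏' n : ℕ, (1 - q ^ (n + 1) * x) :=
    tprod_congr fun n => by ring
  have e4 : (∏' n : ℕ, ((1 : ℂ) - q ^ n * (q * (q * x)⁻¹))) = ∏' n : ℕ, (1 - q ^ n * x⁻¹) :=
    tprod_congr fun n => by
      rw [mul_inv, show q ^ n * (q * (q⁻¹ * x⁻¹)) = q ^ n * (q * q⁻¹) * x⁻¹ by ring,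
        mul_inv_cancel₀ hq0, mul_one]
  have e5 : (∏' n : ℕ, ((1 : ℂ) - q ^ n * (q * x⁻¹))) = ∏' n : ℕ, (1 - q ^ (n + 1) * x⁻¹) :=
    tprod_congr fun n => by ring
  rw [e3, e4, e5, hAshift, hBshift, pow_zero, one_mul, one_mul]
  have key : (1 : ℂ) - x⁻¹ = -x⁻¹ * (1 - x) := by field_simp; ring
  rw [key]
  ring

/-- For odd `N`, the function `θ₀^{(N)}(·,τ)` is periodic with respect to the lattice
`ℤ + ℤτ`, at every point where the relevant denominators are nonzero. -/
theorem theta0N_periodic (N : ℕ) (hN : 0 < N) (hNodd : Odd N) (τ : ℂ) (hτ : 0 < τ.im)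
    (z : ℂ)
    (h0 : theta0 ((N : ℂ) * z) ((N : ℂ) * τ) ≠ 0)
    (h1 : theta0 ((N : ℂ) * (z + 1)) ((N : ℂ) * τ) ≠ 0)
    (h2 : theta0 ((N : ℂ) * (z + τ)) ((N : ℂ) * τ) ≠ 0) :
    theta0N N (z + 1) τ = theta0N N z τ ∧ theta0N N (z + τ) τ = theta0N N z τ := by
  have hx : e2 z ≠ 0 := e2_ne_zero z
  have hNτ : 0 < ((N : ℂ) * τ).im := by
    rw [Complex.mul_im, Complex.natCast_im, Complex.natCast_re, zero_mul, add_zero]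
    exact mul_pos (by exact_mod_cast hN) hτ
  constructor
  · have d1 : theta0 ((N : ℂ) * (z + 1)) ((N : ℂ) * τ) = theta0 ((N : ℂ) * z) ((N : ℂ) * τ) := by
      rw [mul_add, mul_one, theta0_add_nat]
    rw [theta0N, theta0N, theta0_add_one, d1]
  · have e6 : theta0 (z + τ) τ = -(e2 z)⁻¹ * theta0 z τ := theta0_add_tau z τ hτ
    have e7 : theta0 ((N : ℂ) * (z + τ)) ((N : ℂ) * τ) =
        -(e2 z ^ N)⁻¹ * theta0 ((N : ℂ) * z) ((N : ℂ) * τ) := by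
      rw [mul_add, theta0_add_tau ((N : ℂ) * z) ((N : ℂ) * τ) hNτ, e2_nat_mul]
    have hxN : (e2 z ^ N)⁻¹ ≠ 0 := inv_ne_zero (pow_ne_zero _ hx)
    rw [theta0N, theta0N, e6, e7, mul_pow, hNodd.neg_pow, inv_pow, neg_mul, neg_mul,
      neg_div_neg_eq, mul_div_mul_left _ _ hxN]
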